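/- Suppose a positive kernel h_t(x,y) satisfies, for constants c_l > 0, C_l > 0, the lower bound h_t(x,y) ≥ C_l w(B(x,√t))^{−1} e^{−c_l ‖x−y‖²/t}, and for some C₁ ≥ 1 the inequality h_t(x,y) ≥ C₁^{−1}(1 + ‖x−y‖/√t)^{−2} h_t(x, σ_α(y)) for every root α ∈ R. Then, by induction on the length of an admissible sequence 𝛂 = (α₁,…,α_m) ∈ 𝒜(x,y), one has h_t(x,y) ≥ C₁^{−m} ρ_𝛂(x,y,t) h_t(x, σ_𝛂(y)) ≥ C₁^{−m} C_l w(B(x,√t))^{−1} e^{−c_l d(x,y)²/t} ρ_𝛂(x,y,t), where σ_𝛂 = σ_{α_m}∘⋯∘σ_{α₁} and ρ_𝛂 is defined as the product ∏_{j=0}^{m−1}(1 + ‖x − σ_{α_j}∘⋯∘σ_{α₁}(y)‖/√t)^{−2}. -/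

import Mathlib

open scoped RealInnerProductSpace
noncomputable section

/-- `ℝ^N` with the Euclidean structure. -/
abbrev Euc (N : ℕ) := EuclideanSpace ℝ (Fin N)

/-- The reflection `σ_α` in the hyperplane orthogonal to `α`. -/
def sigmaRefl {N : ℕ} (α : Euc N) : Euc N ≃ₗᵢ[ℝ] Euc N :=
  Submodule.reflection (ℝ ∙ α)ᗮ

/-- The orbit distance `d(x,y) = min_{σ ∈ G} ‖x − σ(y)‖`. -/
def orbDist {N : ℕ} (G : Subgroup (Euc N ≃ₗᵢ[ℝ] Euc N)) (x y : Euc N) : ℝ :=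
  ⨅ σ : G, ‖x - (σ : Euc N ≃ₗᵢ[ℝ] Euc N) y‖

/-- The hypotheses defining a normalized root system. -/
structure IsNormalizedRootSystem {N : ℕ} (R : Finset (Euc N)) : Prop where
  ne_zero : (0 : Euc N) ∉ R
  neg_mem : ∀ α ∈ R, -α ∈ R
  smul_mem : ∀ α ∈ R, ∀ c : ℝ, c • α ∈ R → c • α = α ∨ c • α = -α
  refl_mem : ∀ α ∈ R, ∀ β ∈ R, sigmaRefl α β ∈ R
  norm_eq : ∀ α ∈ R, ‖α‖ = Real.sqrt 2

/-- The Coxeter (reflection) group generated by the reflections `σ_α`, `α ∈ R`. -/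
def coxeterGroup {N : ℕ} (R : Finset (Euc N)) : Subgroup (Euc N ≃ₗᵢ[ℝ] Euc N) :=
  Subgroup.closure ((fun α => sigmaRefl α) '' (R : Set (Euc N)))

/-- The weight function of the measure `dw`. -/
def weight {N : ℕ} (R : Finset (Euc N)) (k : Euc N → ℝ) (x : Euc N) : ℝ :=
  ∏ α ∈ R, |⟪x, α⟫| ^ (k α)

/-- The weighted volume of the closed Euclidean ball. -/
def wBall {N : ℕ} (R : Finset (Euc N)) (k : Euc N → ℝ) (x : Euc N) (r : ℝ) : ℝ :=
  ∫ y in Metric.closedBall x r, weight R k y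

/-- Successive application of the reflections determined by a list of roots
(the head of the list acts first). -/
def applyList {N : ℕ} (l : List (Euc N)) (y : Euc N) : Euc N :=
  l.foldl (fun z α => sigmaRefl α z) y

/-- The product `ρ_𝛂(x,y,t)` over the partial compositions of the reflections of `l`. -/
def rhoSeq {N : ℕ} (l : List (Euc N)) (x y : Euc N) (t : ℝ) : ℝ :=
  ∏ j ∈ Finset.range l.length,
    ((1 + ‖x - applyList (l.take j) y‖ / Real.sqrt t) ^ 2)⁻¹


section Aux
variable {N : ℕ}

lemma applyList_nil (y : Euc N) : applyList [] y = y := rfl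

lemma applyList_cons (α : Euc N) (l : List (Euc N)) (y : Euc N) :
    applyList (α :: l) y = applyList l (sigmaRefl α y) := rfl

lemma applyList_eq_group (R : Finset (Euc N)) (l : List (Euc N))
    (hl : ∀ a ∈ l, a ∈ R) :
    ∃ g : coxeterGroup R, ∀ y, applyList l y = (g : Euc N ≃ₗᵢ[ℝ] Euc N) y := by
  induction l with
  | nil => exact ⟨1, fun y => rfl⟩
  | cons α l ih =>
    obtain ⟨g, hg⟩ := ih (fun a ha => hl a (List.mem_cons_of_mem _ ha))
    have hmem : sigmaRefl α ∈ coxeterGroup R :=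
      Subgroup.subset_closure ⟨α, by simpa using hl α (List.mem_cons_self), rfl⟩
    refine ⟨g * ⟨sigmaRefl α, hmem⟩, fun y => ?_⟩
    rw [applyList_cons, hg]
    rfl

lemma orbDist_apply (G : Subgroup (Euc N ≃ₗᵢ[ℝ] Euc N)) (x y : Euc N)
    (g : G) : orbDist G x ((g : Euc N ≃ₗᵢ[ℝ] Euc N) y) = orbDist G x y := by
  unfold orbDist
  rw [iInf, iInf]
  congr 1
  ext r
  constructor
  · rintro ⟨σ, rfl⟩
    exact ⟨σ * g, by simp [LinearIsometryEquiv.coe_mul]⟩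
  · rintro ⟨σ, rfl⟩
    exact ⟨σ * g⁻¹, by simp [LinearIsometryEquiv.coe_mul]⟩

lemma rhoSeq_nil (x y : Euc N) (t : ℝ) : rhoSeq [] x y t = 1 := by
  simp [rhoSeq]

lemma rhoSeq_cons (α : Euc N) (l : List (Euc N)) (x y : Euc N) (t : ℝ) :
    rhoSeq (α :: l) x y t =
      ((1 + ‖x - y‖ / Real.sqrt t) ^ 2)⁻¹ * rhoSeq l x (sigmaRefl α y) t := by
  unfold rhoSeq
  rw [List.length_cons, Finset.prod_range_succ']
  simp only [List.take_succ_cons, applyList_cons, List.take_zero, applyList_nil]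
  ring

lemma rhoSeq_nonneg (l : List (Euc N)) (x y : Euc N) (t : ℝ) :
    0 ≤ rhoSeq l x y t :=
  Finset.prod_nonneg fun _ _ => inv_nonneg.2 (sq_nonneg _)

theorem iterated_lower_bound_aux (R : Finset (Euc N))
    (h : ℝ → Euc N → Euc N → ℝ) (C₁ : ℝ) (hC₁ : 1 ≤ C₁)
    (hrefl : ∀ t, 0 < t → ∀ x y : Euc N, ∀ α ∈ R,
      C₁⁻¹ * ((1 + ‖x - y‖ / Real.sqrt t) ^ 2)⁻¹ * h t x (sigmaRefl α y) ≤ h t x y)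
    (t : ℝ) (ht : 0 < t) (x : Euc N) :
    ∀ l : List (Euc N), (∀ a ∈ l, a ∈ R) → ∀ y : Euc N,
      (C₁ ^ l.length)⁻¹ * rhoSeq l x y t * h t x (applyList l y) ≤ h t x y := by
  intro l
  induction l with
  | nil =>
    intro _ y
    simp [rhoSeq_nil, applyList_nil]
  | cons α l ih =>
    intro hl y
    have hα : α ∈ R := hl α (List.mem_cons_self)
    have ihy := ih (fun a ha => hl a (List.mem_cons_of_mem _ ha)) (sigmaRefl α y)
    have hC₁0 : (0:ℝ) < C₁ := lt_of_lt_of_le one_pos hC₁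
    calc (C₁ ^ (α :: l).length)⁻¹ * rhoSeq (α :: l) x y t * h t x (applyList (α :: l) y)
        = C₁⁻¹ * ((1 + ‖x - y‖ / Real.sqrt t) ^ 2)⁻¹ *
          ((C₁ ^ l.length)⁻¹ * rhoSeq l x (sigmaRefl α y) t *
            h t x (applyList l (sigmaRefl α y))) := by
          rw [rhoSeq_cons, applyList_cons, List.length_cons, pow_succ, mul_inv]
          ring
      _ ≤ C₁⁻¹ * ((1 + ‖x - y‖ / Real.sqrt t) ^ 2)⁻¹ * h t x (sigmaRefl α y) := by
          apply mul_le_mul_of_nonneg_left ihy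
          positivity
      _ ≤ h t x y := hrefl t ht x y α hα

end Aux

/-- the iterated lower bound along an admissible sequence. -/
theorem iterated_lower_bound {N : ℕ} (R : Finset (Euc N)) (hR : IsNormalizedRootSystem R)
    (hG : Finite (coxeterGroup R)) (k : Euc N → ℝ) (hk : ∀ α ∈ R, 0 < k α)
    (h : ℝ → Euc N → Euc N → ℝ) (hpos : ∀ t, 0 < t → ∀ x y, 0 < h t x y)
    (cl Cl C₁ : ℝ) (hcl : 0 < cl) (hCl : 0 < Cl) (hC₁ : 1 ≤ C₁)
    (hlow : ∀ t, 0 < t → ∀ x y : Euc N,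
      Cl * (wBall R k x (Real.sqrt t))⁻¹ * Real.exp (-cl * ‖x - y‖ ^ 2 / t) ≤ h t x y)
    (hrefl : ∀ t, 0 < t → ∀ x y : Euc N, ∀ α ∈ R,
      C₁⁻¹ * ((1 + ‖x - y‖ / Real.sqrt t) ^ 2)⁻¹ * h t x (sigmaRefl α y) ≤ h t x y) :
    ∀ t, 0 < t → ∀ x y : Euc N, ∀ l : List (Euc N), (∀ a ∈ l, a ∈ R) →
      orbDist (coxeterGroup R) x (applyList l y) = ‖x - applyList l y‖ →
      (C₁ ^ l.length)⁻¹ * rhoSeq l x y t * h t x (applyList l y) ≤ h t x y ∧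
      (C₁ ^ l.length)⁻¹ * Cl * (wBall R k x (Real.sqrt t))⁻¹ *
        Real.exp (-cl * (orbDist (coxeterGroup R) x y) ^ 2 / t) * rhoSeq l x y t
        ≤ h t x y := by
  intro t ht x y l hl hadm
  have part1 := iterated_lower_bound_aux R h C₁ hC₁ hrefl t ht x l hl y
  refine ⟨part1, ?_⟩
  obtain ⟨g, hg⟩ := applyList_eq_group R l hl
  have hkey : orbDist (coxeterGroup R) x y = ‖x - applyList l y‖ := by
    rw [← hadm, hg y, orbDist_apply]
  rw [hkey]
  have hC₁0 : (0:ℝ) < C₁ := lt_of_lt_of_le one_pos hC₁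
  have hnn : (0:ℝ) ≤ (C₁ ^ l.length)⁻¹ * rhoSeq l x y t := by
    have := rhoSeq_nonneg l x y t
    positivity
  calc (C₁ ^ l.length)⁻¹ * Cl * (wBall R k x (Real.sqrt t))⁻¹ *
        Real.exp (-cl * ‖x - applyList l y‖ ^ 2 / t) * rhoSeq l x y t
      = (C₁ ^ l.length)⁻¹ * rhoSeq l x y t *
        (Cl * (wBall R k x (Real.sqrt t))⁻¹ *
          Real.exp (-cl * ‖x - applyList l y‖ ^ 2 / t)) := by ring
    _ ≤ (C₁ ^ l.length)⁻¹ * rhoSeq l x y t * h t x (applyList l y) :=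
        mul_le_mul_of_nonneg_left (hlow t ht x (applyList l y)) hnn
    _ ≤ h t x y := part1
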